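/- Fix an integer q ≥ 1 and set p = 2q − 1. For an integer K ≥ 1 and λ > 0, define Q_{2p}(z) = Σ_{l∈ℤ} sinc(π(z+l))^{2p+2}, Q_{2p−2q}(z) = Σ_{l∈ℤ} sinc(π(z+l))^{2p−2q+2}, φ(u, x) = Q_{2p}(u/K)^{−1/2} Σ_{l∈ℤ} sinc(π(u/K + l))^{p+1} exp(−2πi·x·(u + lK)), μ(u) = (2πu)^{2q} sinc(πu/K)^{2q} Q_{2p−2q}(u/K)/Q_{2p}(u/K), W(x, t) = ∫_0^K φ(u, x)·conj(φ(u, t))/(1 + λμ(u)) du, the bandwidth h by h^{−1} = ∫_0^K (1 + λ(πu)^{2q})^{−1} du, the scaled kernel 𝒦(x, t) = h·W(hx, ht), the parameter k = λ^{1/(2q)}·π·K, and the constant c₁ = 1/(K·h). Define the regression spline equivalent kernel on ℝ by K_rs(x, t) = ∫_0^1 φ₁(u, x)·conj(φ₁(u, t)) du, where φ₁(u, x) = Q_{2p}(u)^{−1/2} Σ_{l∈ℤ} sinc(π(u + l))^{p+1} exp(−2πi·x·(u + l)). Then there exists a constant C = C(q) < ∞, independent of K, λ, x, t, such that whenever 0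 < k < 1, |c₁·𝒦(c₁x, c₁t) − K_rs(x, t)| ≤ C·k^{2q} for all x, t ∈ ℝ. -/

import Mathlib

open Real MeasureTheory ComplexConjugate

/-- `sinc x = sin x / x` for `x ≠ 0`, and `sinc 0 = 1`. -/
noncomputable def sinc (x : ℝ) : ℝ := if x = 0 then 1 else Real.sin x / x

/-- `Q_n(z) = Σ_{l ∈ ℤ} sinc(π(z+l))^n` (here `n` is the power, so `Q_{2p}` of the
paper is `Qs (2*p+2)` and `Q_{2p-2q}` is `Qs (2*p-2*q+2)`). -/
noncomputable def Qs (n : ℕ) (z : ℝ) : ℝ := ∑' l : ℤ, _root_.sinc (Real.pi * (z + l)) ^ n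

/-- `φ(u,x) = Q_{2p}(u/K)^{−1/2} Σ_{l ∈ ℤ} sinc(π(u/K + l))^{p+1} exp(−2πi x (u + lK))`. -/
noncomputable def phic (K p : ℕ) (u x : ℝ) : ℂ :=
  (((Real.sqrt (Qs (2 * p + 2) (u / K)))⁻¹ : ℝ) : ℂ) *
    ∑' l : ℤ, ((_root_.sinc (Real.pi * (u / K + l)) ^ (p + 1) : ℝ) : ℂ) *
      Complex.exp (-2 * (Real.pi : ℂ) * Complex.I * (x : ℂ) * ((u : ℂ) + (l : ℂ) * (K : ℂ)))

/-- `μ(u) = (2πu)^{2q} sinc(πu/K)^{2q} Q_{2p−2q}(u/K)/Q_{2p}(u/K)`. -/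
noncomputable def muc (K p q : ℕ) (u : ℝ) : ℝ :=
  (2 * Real.pi * u) ^ (2 * q) * _root_.sinc (Real.pi * u / K) ^ (2 * q) *
    Qs (2 * p - 2 * q + 2) (u / K) / Qs (2 * p + 2) (u / K)

/-- The asymptotic equivalent kernel on ℝ:
`W(x,t) = ∫_0^K φ(u,x) conj(φ(u,t)) / (1 + λμ(u)) du`. -/
noncomputable def Wker (K p q : ℕ) (lam : ℝ) (x t : ℝ) : ℂ :=
  ∫ u in (0:ℝ)..(K : ℝ),
    phic K p u x * conj (phic K p u t) / (((1 + lam * muc K p q u : ℝ)) : ℂ)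

/-- The regression spline equivalent kernel on ℝ:
`K_rs(x,t) = ∫_0^1 φ₁(u,x) conj(φ₁(u,t)) du` where `φ₁` is `φ` with unit knot spacing. -/
noncomputable def Krs (p : ℕ) (x t : ℝ) : ℂ :=
  ∫ u in (0:ℝ)..1, phic 1 p u x * conj (phic 1 p u t)

namespace Stmt14


lemma sinc_zero : _root_.sinc 0 = 1 := if_pos rfl

lemma sinc_neg (x : ℝ) : _root_.sinc (-x) = _root_.sinc x := by
  unfold _root_.sinc
  rcases eq_or_ne x 0 with h | h
  · simp [h]
  · rw [if_neg (neg_ne_zero.mpr h), if_neg h, Real.sin_neg, neg_div_neg_eq]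

lemma abs_sinc_le_one (x : ℝ) : |_root_.sinc x| ≤ 1 := by
  unfold _root_.sinc
  rcases eq_or_ne x 0 with h | h
  · simp [h]
  · rw [if_neg h, abs_div, div_le_one (abs_pos.mpr h)]
    exact Real.abs_sin_le_abs

lemma abs_sinc_le_inv (x : ℝ) (hx : x ≠ 0) : |_root_.sinc x| ≤ |x|⁻¹ := by
  unfold _root_.sinc
  rw [if_neg hx, abs_div, div_eq_mul_inv]
  simpa using mul_le_mul_of_nonneg_right (Real.abs_sin_le_one x) (inv_nonneg.mpr (abs_nonneg x))

lemma continuous_sinc : Continuous _root_.sinc := by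
  rw [continuous_iff_continuousAt]
  intro x
  rcases eq_or_ne x 0 with rfl | hx
  · have hd : HasDerivAt Real.sin 1 0 := by
      simpa using Real.hasDerivAt_sin 0
    have hs := hasDerivAt_iff_tendsto_slope.mp hd
    have hs' : Filter.Tendsto _root_.sinc (nhdsWithin 0 {(0:ℝ)}ᶜ) (nhds 1) := by
      refine hs.congr' ?_
      filter_upwards [self_mem_nhdsWithin] with y hy
      have hy0 : y ≠ 0 := hy
      simp [slope, _root_.sinc, hy0, div_eq_inv_mul]
    rw [ContinuousAt, ← nhdsNE_sup_pure (0:ℝ)]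
    rw [Filter.tendsto_sup]
    refine ⟨by simpa [sinc_zero] using hs', ?_⟩
    simpa [sinc_zero] using (tendsto_pure_nhds _root_.sinc 0)
  · have : ∀ᶠ y in nhds x, _root_.sinc y = Real.sin y / y := by
      filter_upwards [isOpen_compl_singleton.mem_nhds hx] with y hy
      have hy0 : y ≠ 0 := hy
      simp [_root_.sinc, hy0]
    have hca : ContinuousAt (fun y : ℝ => Real.sin y / y) x :=
      (Real.continuous_sin.continuousAt).div continuousAt_id hx
    exact hca.congr (Filter.EventuallyEq.symm this)


noncomputable def D (l : ℤ) : ℝ := if l = 0 then 1 else 4 * (((l : ℝ)) ^ 2)⁻¹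

lemma D_nonneg (l : ℤ) : 0 ≤ D l := by
  unfold D; split
  · norm_num
  · positivity

lemma summable_D : Summable D := by
  have h1 : Summable (fun l : ℤ => 4 * (((l : ℝ)) ^ 2)⁻¹) := by
    have := (summable_one_div_int_pow (p := 2)).mpr one_lt_two
    simpa [one_div] using this.mul_left 4
  have h2 : Summable (fun l : ℤ => if l = 0 then (1:ℝ) else 0) := by
    refine summable_of_ne_finset_zero (s := {0}) fun i hi => ?_
    simp only [Finset.mem_singleton] at hi
    simp [hi]
  refine (h1.add h2).congr fun l => ?_
  unfold D
  rcases eq_or_ne l 0 with rfl | hl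
  · simp
  · simp [hl]

noncomputable def S : ℝ := ∑' l, D l

lemma S_nonneg : 0 ≤ S := tsum_nonneg D_nonneg

lemma term_le_D {n : ℕ} (hn : 2 ≤ n) {v : ℝ} (h0 : 0 ≤ v) (h1 : v ≤ 1) (l : ℤ) :
    |_root_.sinc (Real.pi * (v + l))| ^ n ≤ D l := by
  set x := Real.pi * (v + l) with hxdef
  have hnn : (0:ℝ) ≤ |_root_.sinc x| := abs_nonneg _
  have habs : |_root_.sinc x| ≤ 1 := abs_sinc_le_one x
  have hle1 : |_root_.sinc x| ^ n ≤ 1 := pow_le_one₀ hnn habs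
  rcases eq_or_ne l 0 with rfl | hl
  · simpa [D] using hle1
  rcases eq_or_ne l (-1) with rfl | hl1
  · have hD : D (-1) = 4 := by norm_num [D]
    rw [hD]; linarith
  -- now |v + l| ≥ |l| / 2 > 0
  have hA : (1:ℝ) ≤ |(l:ℝ)| := by
    rw [← Int.cast_abs]
    exact_mod_cast Int.one_le_abs hl
  have hvl : |(l:ℝ)| / 2 ≤ |v + (l:ℝ)| := by
    rcases lt_or_ge l 0 with hneg | hpos
    · have hl2 : l ≤ -2 := by omega
      have hl2' : (l:ℝ) ≤ -2 := by exact_mod_cast hl2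
      have habs2 : |v + (l:ℝ)| = -(v + l) := abs_of_nonpos (by linarith)
      have habsl : |(l:ℝ)| = -l := abs_of_nonpos (by linarith)
      rw [habs2, habsl]; linarith
    · have hl1 : 1 ≤ l := by omega
      have hl1' : (1:ℝ) ≤ (l:ℝ) := by exact_mod_cast hl1
      have habs2 : |v + (l:ℝ)| = v + l := abs_of_nonneg (by linarith)
      have habsl : |(l:ℝ)| = l := abs_of_nonneg (by linarith)
      rw [habs2, habsl]; linarith
  have hx : |(l:ℝ)| / 2 ≤ |x| := by
    rw [hxdef, abs_mul, abs_of_nonneg Real.pi_pos.le]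
    calc |(l:ℝ)| / 2 ≤ |v + (l:ℝ)| := hvl
      _ = 1 * |v + (l:ℝ)| := (one_mul _).symm
      _ ≤ Real.pi * |v + (l:ℝ)| :=
          mul_le_mul_of_nonneg_right (by linarith [Real.pi_gt_three]) (abs_nonneg _)
  have hxpos : 0 < |x| := lt_of_lt_of_le (by linarith) hx
  have hxne : x ≠ 0 := fun h => by simp [h] at hxpos
  have hinv : |x|⁻¹ ≤ 2 / |(l:ℝ)| := by
    rw [div_eq_mul_inv, ← (by field_simp : (|(l:ℝ)| / 2)⁻¹ = 2 * |(l:ℝ)|⁻¹)]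
    exact inv_anti₀ (by linarith) hx
  have step1 : |_root_.sinc x| ^ n ≤ |_root_.sinc x| ^ 2 := pow_le_pow_of_le_one hnn habs hn
  have step2 : |_root_.sinc x| ^ 2 ≤ (|x|⁻¹) ^ 2 :=
    pow_le_pow_left₀ hnn (abs_sinc_le_inv x hxne) 2
  have step3 : (|x|⁻¹) ^ 2 ≤ (2 / |(l:ℝ)|) ^ 2 :=
    pow_le_pow_left₀ (inv_nonneg.mpr (abs_nonneg _)) hinv 2
  have hD : D l = 4 * (((l:ℝ)) ^ 2)⁻¹ := by simp [D, hl]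
  have : (2 / |(l:ℝ)|) ^ 2 = 4 * (((l:ℝ)) ^ 2)⁻¹ := by
    rw [div_pow, sq_abs]; ring
  rw [hD, ← this]
  linarith

lemma summable_abs_term {n : ℕ} (hn : 2 ≤ n) {v : ℝ} (h0 : 0 ≤ v) (h1 : v ≤ 1) :
    Summable (fun l : ℤ => |_root_.sinc (Real.pi * (v + l))| ^ n) :=
  Summable.of_nonneg_of_le (fun l => by positivity) (term_le_D hn h0 h1) summable_D

lemma summable_term {n : ℕ} (hn : 2 ≤ n) (he : Even n) {v : ℝ} (h0 : 0 ≤ v) (h1 : v ≤ 1) :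
    Summable (fun l : ℤ => _root_.sinc (Real.pi * (v + l)) ^ n) :=
  (summable_abs_term hn h0 h1).congr fun l => he.pow_abs _

lemma Qs_nonneg {n : ℕ} (he : Even n) (v : ℝ) : 0 ≤ Qs n v :=
  tsum_nonneg fun l => he.pow_nonneg _

lemma Qs_le_S {n : ℕ} (hn : 2 ≤ n) (he : Even n) {v : ℝ} (h0 : 0 ≤ v) (h1 : v ≤ 1) :
    Qs n v ≤ S := by
  refine Summable.tsum_le_tsum (fun l => ?_) (summable_term hn he h0 h1) summable_D
  rw [← he.pow_abs]
  exact term_le_D hn h0 h1 l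

lemma sinc_lower {w : ℝ} (h0 : 0 ≤ w) (h1 : w ≤ 1/2) : 2 / Real.pi ≤ _root_.sinc (Real.pi * w) := by
  rcases eq_or_lt_of_le h0 with rfl | hw
  · rw [mul_zero, sinc_zero, div_le_one Real.pi_pos]
    linarith [Real.pi_gt_three]
  · have hpw : 0 < Real.pi * w := by positivity
    have hle : Real.pi * w ≤ Real.pi / 2 := by
      rw [div_eq_mul_inv]
      calc Real.pi * w ≤ Real.pi * (1/2) :=
        mul_le_mul_of_nonneg_left h1 Real.pi_pos.le
      _ = Real.pi * 2⁻¹ := by norm_num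
    have := Real.mul_le_sin hpw.le hle
    rw [_root_.sinc, if_neg hpw.ne', le_div_iff₀ hpw]
    linarith

lemma le_Qs {n : ℕ} (hn : 2 ≤ n) (he : Even n) {v : ℝ} (h0 : 0 ≤ v) (h1 : v ≤ 1) :
    (2 / Real.pi) ^ n ≤ Qs n v := by
  have h2pi : (0:ℝ) ≤ 2 / Real.pi := by positivity
  rcases le_or_gt v (1/2) with hv | hv
  · have key : 2 / Real.pi ≤ _root_.sinc (Real.pi * (v + ((0:ℤ):ℝ))) := by
      rw [Int.cast_zero, add_zero]
      exact sinc_lower h0 hv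
    calc (2 / Real.pi) ^ n ≤ _root_.sinc (Real.pi * (v + ((0:ℤ):ℝ))) ^ n :=
          pow_le_pow_left₀ h2pi key n
      _ ≤ Qs n v :=
          Summable.le_tsum (summable_term hn he h0 h1) 0 fun l _ => he.pow_nonneg _
  · have key : 2 / Real.pi ≤ _root_.sinc (Real.pi * (v + ((-1:ℤ):ℝ))) := by
      have : Real.pi * (v + ((-1:ℤ):ℝ)) = -(Real.pi * (1 - v)) := by push_cast; ring
      rw [this, sinc_neg]
      exact sinc_lower (by linarith) (by linarith)
    calc (2 / Real.pi) ^ n ≤ _root_.sinc (Real.pi * (v + ((-1:ℤ):ℝ))) ^ n :=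
          pow_le_pow_left₀ h2pi key n
      _ ≤ Qs n v :=
          Summable.le_tsum (summable_term hn he h0 h1) (-1) fun l _ => he.pow_nonneg _

lemma Qs_pos {n : ℕ} (hn : 2 ≤ n) (he : Even n) {v : ℝ} (h0 : 0 ≤ v) (h1 : v ≤ 1) :
    0 < Qs n v :=
  lt_of_lt_of_le (by positivity) (le_Qs hn he h0 h1)

lemma continuousOn_Qs {n : ℕ} (hn : 2 ≤ n) : ContinuousOn (Qs n) (Set.Icc (0:ℝ) 1) := by
  refine continuousOn_tsum (u := D) (fun l => ?_) summable_D (fun l v hv => ?_)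
  · exact ((continuous_sinc.comp (by continuity)).pow n).continuousOn
  · rw [Real.norm_eq_abs, abs_pow]
    exact term_le_D hn hv.1 hv.2 l


lemma norm_exp_one (x v : ℝ) (l : ℤ) :
    ‖Complex.exp (-2 * (Real.pi : ℂ) * Complex.I * (x : ℂ) * ((v : ℂ) + (l : ℂ)))‖ = 1 := by
  have harg : -2 * (Real.pi : ℂ) * Complex.I * (x : ℂ) * ((v : ℂ) + (l : ℂ)) =
      ((-2 * Real.pi * x * (v + l) : ℝ) : ℂ) * Complex.I := by
    push_cast; ring
  rw [harg, Complex.norm_exp_ofReal_mul_I]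

lemma phic_one_eq (q : ℕ) (hq : 1 ≤ q) (v x : ℝ) :
    phic 1 (2*q-1) v x = (((Real.sqrt (Qs (4*q) v))⁻¹ : ℝ) : ℂ) *
      ∑' l : ℤ, ((_root_.sinc (Real.pi * (v + l)) ^ (2*q) : ℝ) : ℂ) *
        Complex.exp (-2 * (Real.pi : ℂ) * Complex.I * (x : ℂ) * ((v : ℂ) + (l : ℂ))) := by
  have e1 : 2*(2*q-1)+2 = 4*q := by omega
  have e2 : (2*q-1)+1 = 2*q := by omega
  unfold phic
  rw [e1, e2]
  simp only [Nat.cast_one, div_one, mul_one]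

lemma phic_scale (q K : ℕ) (hq : 1 ≤ q) (hK : 1 ≤ K) (v x : ℝ) :
    phic K (2*q-1) ((K:ℝ)*v) (x/(K:ℝ)) = phic 1 (2*q-1) v x := by
  have hKne : ((K:ℕ):ℝ) ≠ 0 := by positivity
  unfold phic
  have harg : ((K:ℝ)*v) / ((K:ℕ):ℝ) = v / ((1:ℕ):ℝ) := by
    rw [Nat.cast_one, div_one]
    field_simp
  rw [harg]
  congr 1
  refine tsum_congr fun l => ?_
  have hKC : ((K:ℕ):ℂ) ≠ 0 := by exact_mod_cast hKne
  congr 1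
  congr 1
  push_cast
  field_simp

lemma muc_scale (q K : ℕ) (hq : 1 ≤ q) (hK : 1 ≤ K) (v : ℝ) :
    muc K (2*q-1) q ((K:ℝ)*v) =
      (2*(K:ℝ))^(2*q) * (Real.pi * v * _root_.sinc (Real.pi * v))^(2*q) *
        Qs (2*q) v / Qs (4*q) v := by
  have hKne : ((K:ℕ):ℝ) ≠ 0 := by positivity
  have e1 : 2*(2*q-1)+2 = 4*q := by omega
  have e2 : 2*(2*q-1)-2*q+2 = 2*q := by omega
  unfold muc
  rw [e1, e2]
  have h1 : Real.pi * ((K:ℝ)*v) / ((K:ℕ):ℝ) = Real.pi * v := by field_simp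
  have h2 : ((K:ℝ)*v) / ((K:ℕ):ℝ) = v := by field_simp
  rw [h1, h2]
  rw [← mul_pow, ← mul_pow]
  rw [show (2*Real.pi*((K:ℝ)*v)*_root_.sinc (Real.pi*v)) = (2*(K:ℝ)*(Real.pi*v*_root_.sinc (Real.pi*v))) from by ring]

lemma norm_phic_le (q : ℕ) (hq : 1 ≤ q) {v : ℝ} (h0 : 0 ≤ v) (h1 : v ≤ 1) (x : ℝ) :
    ‖phic 1 (2*q-1) v x‖ ≤ (Real.sqrt ((2/Real.pi)^(4*q)))⁻¹ * S := by
  have hn2 : 2 ≤ 2*q := by omega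
  have hn4 : 2 ≤ 4*q := by omega
  have he2 : Even (2*q) := ⟨q, by ring⟩
  have he4 : Even (4*q) := ⟨2*q, by ring⟩
  rw [phic_one_eq q hq, norm_mul]
  have hterm : ∀ l : ℤ, ‖((_root_.sinc (Real.pi * (v + l)) ^ (2*q) : ℝ) : ℂ) *
      Complex.exp (-2 * (Real.pi : ℂ) * Complex.I * (x : ℂ) * ((v : ℂ) + (l : ℂ)))‖ =
      |_root_.sinc (Real.pi * (v + l))| ^ (2*q) := fun l => by
    rw [norm_mul, Complex.norm_real, norm_exp_one, mul_one, Real.norm_eq_abs, abs_pow]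
  have hsumnorm : Summable (fun l : ℤ => ‖((_root_.sinc (Real.pi * (v + l)) ^ (2*q) : ℝ) : ℂ) *
      Complex.exp (-2 * (Real.pi : ℂ) * Complex.I * (x : ℂ) * ((v : ℂ) + (l : ℂ)))‖) :=
    (summable_abs_term hn2 h0 h1).congr fun l => (hterm l).symm
  have hbound1 : ‖(((Real.sqrt (Qs (4*q) v))⁻¹ : ℝ) : ℂ)‖ ≤ (Real.sqrt ((2/Real.pi)^(4*q)))⁻¹ := by
    rw [Complex.norm_real, Real.norm_eq_abs, abs_of_nonneg (by positivity)]
    have hpos : (0:ℝ) < Real.sqrt ((2/Real.pi)^(4*q)) := Real.sqrt_pos.mpr (by positivity)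
    exact inv_anti₀ hpos (Real.sqrt_le_sqrt (le_Qs hn4 he4 h0 h1))
  have hbound2 : ‖∑' l : ℤ, ((_root_.sinc (Real.pi * (v + l)) ^ (2*q) : ℝ) : ℂ) *
      Complex.exp (-2 * (Real.pi : ℂ) * Complex.I * (x : ℂ) * ((v : ℂ) + (l : ℂ)))‖ ≤ S := by
    refine le_trans (norm_tsum_le_tsum_norm hsumnorm) ?_
    refine le_trans (le_of_eq (tsum_congr hterm)) ?_
    exact Summable.tsum_le_tsum (term_le_D hn2 h0 h1) (summable_abs_term hn2 h0 h1) summable_D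
  exact mul_le_mul hbound1 hbound2 (norm_nonneg _) (by positivity)

lemma continuousOn_phic (q : ℕ) (hq : 1 ≤ q) (x : ℝ) :
    ContinuousOn (fun v => phic 1 (2*q-1) v x) (Set.Icc (0:ℝ) 1) := by
  have hn2 : 2 ≤ 2*q := by omega
  have hn4 : 2 ≤ 4*q := by omega
  have he4 : Even (4*q) := ⟨2*q, by ring⟩
  have heq : (fun v => phic 1 (2*q-1) v x) = fun v =>
      (((Real.sqrt (Qs (4*q) v))⁻¹ : ℝ) : ℂ) *
      ∑' l : ℤ, ((_root_.sinc (Real.pi * (v + l)) ^ (2*q) : ℝ) : ℂ) *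
        Complex.exp (-2 * (Real.pi : ℂ) * Complex.I * (x : ℂ) * ((v : ℂ) + (l : ℂ))) :=
    funext fun v => phic_one_eq q hq v x
  rw [heq]
  refine ContinuousOn.mul ?_ ?_
  · refine Complex.continuous_ofReal.comp_continuousOn ?_
    refine ContinuousOn.inv₀ ((continuousOn_Qs hn4).sqrt) fun v hv => ?_
    exact (Real.sqrt_pos.mpr (Qs_pos hn4 he4 hv.1 hv.2)).ne'
  · refine continuousOn_tsum (u := D) (fun l => ?_) summable_D (fun l v hv => ?_)
    · refine Continuous.continuousOn ?_
      refine Continuous.mul ?_ ?_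
      · exact Complex.continuous_ofReal.comp
          ((continuous_sinc.comp (by continuity)).pow _)
      · exact Complex.continuous_exp.comp (by continuity)
    · rw [norm_mul, Complex.norm_real, norm_exp_one, mul_one, Real.norm_eq_abs, abs_pow]
      exact term_le_D hn2 hv.1 hv.2 l


lemma key (q : ℕ) (hq : 1 ≤ q) (K : ℕ) (hK : 1 ≤ K) (lam : ℝ) (hlam : 0 < lam) (x t : ℝ) :
    ‖((((K:ℝ))⁻¹ : ℝ) : ℂ) * Wker K (2*q-1) q lam (x/(K:ℝ)) (t/(K:ℝ)) - Krs (2*q-1) x t‖ ≤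
      ((Real.sqrt ((2/Real.pi)^(4*q)))⁻¹ * S)^2 *
        (lam * ((2*(K:ℝ))^(2*q) * S / (2/Real.pi)^(4*q))) := by
  have hn2 : 2 ≤ 2*q := by omega
  have hn4 : 2 ≤ 4*q := by omega
  have he2 : Even (2*q) := ⟨q, by ring⟩
  have he4 : Even (4*q) := ⟨2*q, by ring⟩
  have hK1 : (1:ℝ) ≤ (K:ℝ) := by exact_mod_cast hK
  have hKR : (0:ℝ) < (K:ℝ) := by linarith
  set g : ℝ → ℂ := fun v => phic 1 (2*q-1) v x * conj (phic 1 (2*q-1) v t) with hgdef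
  set mm : ℝ → ℝ := fun v => (2*(K:ℝ))^(2*q) * (Real.pi * v * _root_.sinc (Real.pi * v))^(2*q) *
    Qs (2*q) v / Qs (4*q) v with hmmdef
  set dd : ℝ → ℂ := fun v => ((1 + lam * mm v : ℝ) : ℂ) with hdddef
  have hfe : ∀ v : ℝ, phic K (2*q-1) ((K:ℝ)*v) (x/(K:ℝ)) *
      conj (phic K (2*q-1) ((K:ℝ)*v) (t/(K:ℝ))) /
      (((1 + lam * muc K (2*q-1) q ((K:ℝ)*v) : ℝ)) : ℂ) = g v / dd v := fun v => by
    rw [phic_scale q K hq hK v x, phic_scale q K hq hK v t, muc_scale q K hq hK v]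
  have hcov := intervalIntegral.integral_comp_mul_left
    (f := fun u => phic K (2*q-1) u (x/(K:ℝ)) * conj (phic K (2*q-1) u (t/(K:ℝ))) /
      (((1 + lam * muc K (2*q-1) q u : ℝ)) : ℂ)) (a := 0) (b := 1) hKR.ne'
  rw [mul_zero, mul_one] at hcov
  have hW : ((((K:ℝ))⁻¹ : ℝ) : ℂ) * Wker K (2*q-1) q lam (x/(K:ℝ)) (t/(K:ℝ)) =
      ∫ v in (0:ℝ)..1, g v / dd v := by
    rw [← Complex.real_smul]
    show ((K:ℝ))⁻¹ • (∫ u in (0:ℝ)..(K:ℝ),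
      phic K (2*q-1) u (x/(K:ℝ)) * conj (phic K (2*q-1) u (t/(K:ℝ))) /
        (((1 + lam * muc K (2*q-1) q u : ℝ)) : ℂ)) = _
    rw [← hcov]
    simp only [hfe]
  have huIcc : Set.uIcc (0:ℝ) 1 = Set.Icc 0 1 := Set.uIcc_of_le zero_le_one
  have hgcont : ContinuousOn g (Set.Icc (0:ℝ) 1) := by
    rw [hgdef]
    exact (continuousOn_phic q hq x).mul
      (Complex.continuous_conj.comp_continuousOn (continuousOn_phic q hq t))
  have hQ4ne : ∀ v ∈ Set.Icc (0:ℝ) 1, Qs (4*q) v ≠ 0 := fun v hv =>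
    (Qs_pos hn4 he4 hv.1 hv.2).ne'
  have hmmcont : ContinuousOn mm (Set.Icc (0:ℝ) 1) := by
    rw [hmmdef]
    refine ContinuousOn.div ?_ (continuousOn_Qs hn4) hQ4ne
    refine ContinuousOn.mul (ContinuousOn.mul continuousOn_const ?_) (continuousOn_Qs hn2)
    exact (((by continuity : Continuous fun v : ℝ => Real.pi * v).mul
      (continuous_sinc.comp (by continuity))).pow _).continuousOn
  have hmm_nonneg : ∀ v ∈ Set.Icc (0:ℝ) 1, 0 ≤ mm v := fun v hv => by
    simp only [hmmdef]
    have h1 := Qs_pos hn4 he4 hv.1 hv.2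
    have h2 := Qs_nonneg he2 v
    have h3 : (0:ℝ) ≤ (2*(K:ℝ))^(2*q) := by positivity
    have h4 : (0:ℝ) ≤ (Real.pi * v * _root_.sinc (Real.pi * v))^(2*q) := he2.pow_nonneg _
    exact div_nonneg (mul_nonneg (mul_nonneg h3 h4) h2) h1.le
  have hr1 : ∀ v ∈ Set.Icc (0:ℝ) 1, 1 ≤ 1 + lam * mm v := fun v hv => by
    have := mul_nonneg hlam.le (hmm_nonneg v hv); linarith
  have hddcont : ContinuousOn dd (Set.Icc (0:ℝ) 1) := by
    simp only [hdddef]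
    exact Complex.continuous_ofReal.comp_continuousOn
      (continuousOn_const.add (continuousOn_const.mul hmmcont))
  have hddne : ∀ v ∈ Set.Icc (0:ℝ) 1, dd v ≠ 0 := fun v hv => by
    simp only [hdddef]
    exact Complex.ofReal_ne_zero.mpr (by linarith [hr1 v hv])
  have hint1 : IntervalIntegrable (fun v => g v / dd v) MeasureTheory.volume 0 1 := by
    apply ContinuousOn.intervalIntegrable
    rw [huIcc]
    exact hgcont.div hddcont hddne
  have hint2 : IntervalIntegrable g MeasureTheory.volume 0 1 := by
    apply ContinuousOn.intervalIntegrable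
    rw [huIcc]
    exact hgcont
  have hKrs : Krs (2*q-1) x t = ∫ v in (0:ℝ)..1, g v := rfl
  rw [hW, hKrs, ← intervalIntegral.integral_sub hint1 hint2]
  refine le_trans (intervalIntegral.norm_integral_le_of_norm_le_const
    (C := ((Real.sqrt ((2/Real.pi)^(4*q)))⁻¹ * S)^2 *
        (lam * ((2*(K:ℝ))^(2*q) * S / (2/Real.pi)^(4*q)))) ?_) (by norm_num)
  intro v hv
  rw [Set.uIoc_of_le zero_le_one] at hv
  have hv' : v ∈ Set.Icc (0:ℝ) 1 := ⟨hv.1.le, hv.2⟩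
  have hgd : g v / dd v - g v = g v * ((dd v)⁻¹ - 1) := by
    rw [div_eq_mul_inv]; ring
  rw [hgd, norm_mul]
  have hgn : ‖g v‖ ≤ ((Real.sqrt ((2/Real.pi)^(4*q)))⁻¹ * S)^2 := by
    simp only [hgdef]
    rw [norm_mul, RCLike.norm_conj, sq]
    have b1 := norm_phic_le q hq hv'.1 hv'.2 x
    have b2 := norm_phic_le q hq hv'.1 hv'.2 t
    exact mul_le_mul b1 b2 (norm_nonneg _) (mul_nonneg (by positivity) S_nonneg)
  have hdn : ‖(dd v)⁻¹ - 1‖ ≤ lam * mm v := by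
    simp only [hdddef]
    have hr1' : 1 ≤ 1 + lam * mm v := hr1 v hv'
    set r : ℝ := 1 + lam * mm v with hr
    have hrpos : 0 < r := by linarith
    have hcast : ((r:ℝ):ℂ)⁻¹ - 1 = (((r⁻¹ - 1 : ℝ)):ℂ) := by push_cast; ring
    have hinv1 : r⁻¹ ≤ 1 := inv_le_one_of_one_le₀ hr1'
    rw [hcast, Complex.norm_real, Real.norm_eq_abs, abs_of_nonpos (by linarith)]
    have hprod : r * r⁻¹ = 1 := mul_inv_cancel₀ hrpos.ne'
    have hgoal : -(r⁻¹ - 1) ≤ r - 1 := by nlinarith [sq_nonneg (r - 1)]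
    have : r - 1 = lam * mm v := by rw [hr]; ring
    linarith
  have hmmle : mm v ≤ (2*(K:ℝ))^(2*q) * S / (2/Real.pi)^(4*q) := by
    simp only [hmmdef]
    have hb : (Real.pi * v * _root_.sinc (Real.pi * v))^(2*q) ≤ 1 := by
      have hvpos : 0 < v := hv.1
      have hne : Real.pi * v ≠ 0 := by positivity
      have hsin : Real.pi * v * _root_.sinc (Real.pi * v) = Real.sin (Real.pi * v) := by
        rw [_root_.sinc, if_neg hne]; field_simp
      rw [hsin, ← he2.pow_abs]
      exact pow_le_one₀ (abs_nonneg _) (Real.abs_sin_le_one _)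
    have hq2 := Qs_le_S hn2 he2 hv'.1 hv'.2
    have hq2n := Qs_nonneg he2 v
    have hKp : (0:ℝ) ≤ (2*(K:ℝ))^(2*q) := by positivity
    refine div_le_div₀ (mul_nonneg hKp S_nonneg) ?_ (by positivity)
      (le_Qs hn4 he4 hv'.1 hv'.2)
    calc (2*(K:ℝ))^(2*q) * (Real.pi * v * _root_.sinc (Real.pi * v))^(2*q) * Qs (2*q) v
        ≤ (2*(K:ℝ))^(2*q) * 1 * Qs (2*q) v :=
          mul_le_mul_of_nonneg_right (mul_le_mul_of_nonneg_left hb hKp) hq2n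
      _ = (2*(K:ℝ))^(2*q) * Qs (2*q) v := by ring
      _ ≤ (2*(K:ℝ))^(2*q) * S := mul_le_mul_of_nonneg_left hq2 hKp
  refine mul_le_mul hgn (le_trans hdn (mul_le_mul_of_nonneg_left hmmle hlam.le))
    (norm_nonneg _) (by positivity)

end Stmt14

theorem stmt14 (q : ℕ) (hq : 1 ≤ q) :
    ∃ C : ℝ, ∀ (K : ℕ), 1 ≤ K → ∀ lam : ℝ, 0 < lam → ∀ h : ℝ, 0 < h →
      h⁻¹ = (∫ u in (0:ℝ)..(K : ℝ), (1 + lam * (Real.pi * u) ^ (2 * q))⁻¹) →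
      ∀ k : ℝ, k = lam ^ ((1 : ℝ) / (2 * q)) * Real.pi * K →
      ∀ c₁ : ℝ, c₁ = 1 / (K * h) →
      0 < k → k < 1 →
      ∀ x t : ℝ,
        ‖(c₁ : ℂ) * ((h : ℂ) * Wker K (2 * q - 1) q lam (h * (c₁ * x)) (h * (c₁ * t))) -
            Krs (2 * q - 1) x t‖ ≤ C * k ^ (2 * q) := by
  refine ⟨((Real.sqrt ((2/Real.pi)^(4*q)))⁻¹ * Stmt14.S)^2 *
    ((2/Real.pi)^(2*q) * (Stmt14.S / (2/Real.pi)^(4*q))), ?_⟩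
  intro K hK lam hlam h hh _hinv k hk c₁ hc₁ hk0 hk1 x t
  have hK1 : (1:ℝ) ≤ (K:ℝ) := by exact_mod_cast hK
  have hKR : (0:ℝ) < (K:ℝ) := by linarith
  have hhne : h ≠ 0 := hh.ne'
  have hargx : h * (c₁ * x) = x / (K:ℝ) := by rw [hc₁]; field_simp
  have hargt : h * (c₁ * t) = t / (K:ℝ) := by rw [hc₁]; field_simp
  rw [hargx, hargt]
  have hch : (c₁ : ℂ) * ((h : ℂ) * Wker K (2*q-1) q lam (x/(K:ℝ)) (t/(K:ℝ))) =
      ((((K:ℝ))⁻¹ : ℝ) : ℂ) * Wker K (2*q-1) q lam (x/(K:ℝ)) (t/(K:ℝ)) := by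
    have hc : c₁ * h = ((K:ℝ))⁻¹ := by rw [hc₁]; field_simp
    calc (c₁ : ℂ) * ((h : ℂ) * Wker K (2*q-1) q lam (x/(K:ℝ)) (t/(K:ℝ)))
        = (((c₁ * h : ℝ)) : ℂ) * Wker K (2*q-1) q lam (x/(K:ℝ)) (t/(K:ℝ)) := by
          push_cast; ring
      _ = _ := by rw [hc]
  rw [hch]
  refine le_trans (Stmt14.key q hq K hK lam hlam x t) ?_
  have hq1 : (0:ℝ) < (q:ℝ) := by exact_mod_cast Nat.lt_of_lt_of_le Nat.zero_lt_one hq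
  have hlamp : (lam ^ ((1:ℝ)/(2*(q:ℝ)))) ^ (2*q : ℕ) = lam := by
    rw [← Real.rpow_natCast (lam ^ ((1:ℝ)/(2*(q:ℝ)))) (2*q), ← Real.rpow_mul hlam.le]
    push_cast
    rw [one_div, inv_mul_cancel₀ (by positivity : (2*(q:ℝ)) ≠ 0), Real.rpow_one]
  have hk2q : k ^ (2*q) = lam * (Real.pi * (K:ℝ)) ^ (2*q) := by
    rw [hk, mul_pow, mul_pow, hlamp, mul_pow]
    ring
  rw [hk2q]
  have hpi : ((2:ℝ)/Real.pi)^(2*q) * (Real.pi * (K:ℝ))^(2*q) = (2*(K:ℝ))^(2*q) := by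
    rw [← mul_pow]
    congr 1
    field_simp
  apply le_of_eq
  rw [← hpi]
  ring
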